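/- Let ℤ̃ denote the ℤG-module whose underlying abelian group is ℤ with G acting through the homomorphism θ: G → Aut(ℤ) = {±1} determined by θ(a_i) = 1 for all 1 ≤ i ≤ n, θ(b_i) = 1 for 1 ≤ i ≤ n−1, and θ(b_n) = −1. Then H^0(G, ℤ̃) = 0, H^1(G, ℤ̃) ≅ ℤ^{2n−2} ⊕ ℤ/2ℤ, and H^2(G, ℤ̃) ≅ ℤ/2ℤ. -/

import Mathlib

open scoped TensorProduct
open scoped commutatorElement

namespace SurfaceOr

/-- Generators: `Sum.inl i` is `aᵢ`, `Sum.inr i` is `bᵢ`. -/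
abbrev Gen (n : ℕ) := Fin n ⊕ Fin n

/-- The single relator `[a₁,b₁][a₂,b₂]⋯[aₙ,bₙ]` of the orientable surface group. -/
def rel (n : ℕ) : FreeGroup (Gen n) :=
  (List.ofFn fun i : Fin n =>
    ⁅(FreeGroup.of (Sum.inl i) : FreeGroup (Gen n)), FreeGroup.of (Sum.inr i)⁆).prod

/-- The orientable surface group of genus `n`. -/
abbrev SurfaceGroup (n : ℕ) := PresentedGroup ({rel n} : Set (FreeGroup (Gen n)))

noncomputable def a {n : ℕ} (i : Fin n) : SurfaceGroup n := PresentedGroup.of (Sum.inl i)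
noncomputable def b {n : ℕ} (i : Fin n) : SurfaceGroup n := PresentedGroup.of (Sum.inr i)

/-- `q k = p₁ p₂ ⋯ p_k` where `pᵢ = [aᵢ,bᵢ]`. -/
noncomputable def q {n : ℕ} (k : ℕ) : SurfaceGroup n :=
  ((List.ofFn fun i : Fin n => ⁅a i, b i⁆).take k).prod

/-- The integral group ring `ℤG`. -/
abbrev A (n : ℕ) := MonoidAlgebra ℤ (SurfaceGroup n)

/-- Inclusion of the group in its group ring. -/
noncomputable def j {n : ℕ} : SurfaceGroup n →* A n := MonoidAlgebra.of ℤ (SurfaceGroup n)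

/-- The Fox derivative `∂p/∂aᵢ = q_{i-1}(1 - aᵢbᵢaᵢ⁻¹)`. -/
noncomputable def Fa {n : ℕ} (i : Fin n) : A n :=
  j (q i.val) * (1 - j (a i * b i * (a i)⁻¹))

/-- The Fox derivative `∂p/∂bᵢ = q_{i-1}aᵢ(1 - bᵢaᵢ⁻¹bᵢ⁻¹)`. -/
noncomputable def Fb {n : ℕ} (i : Fin n) : A n :=
  j (q i.val * a i) * (1 - j (b i * (a i)⁻¹ * (b i)⁻¹))

abbrev P0 (n : ℕ) := A n
abbrev P1 (n : ℕ) := Gen n → A n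
abbrev P2 (n : ℕ) := A n

/-- Coefficients of `d₁`. -/
noncomputable def c {n : ℕ} : Gen n → A n
  | .inl i => j (a i) - 1
  | .inr i => j (b i) - 1

/-- Coefficients of `d₂` (the Fox derivatives of the relator). -/
noncomputable def fox {n : ℕ} : Gen n → A n
  | .inl i => Fa i
  | .inr i => Fb i

/-- `d₁ : P₁ → P₀`, `yᵢ ↦ (aᵢ-1)x`, `zᵢ ↦ (bᵢ-1)x`. -/
noncomputable def d1 {n : ℕ} : P1 n →ₗ[A n] P0 n where
  toFun f := ∑ s, f s * c s
  map_add' f g := by simp [add_mul, Finset.sum_add_distrib]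
  map_smul' r f := by simp [Finset.mul_sum, mul_assoc, smul_eq_mul, mul_add]

/-- `d₂ : P₂ → P₁`, `w ↦ Σᵢ (∂p/∂aᵢ)yᵢ + (∂p/∂bᵢ)zᵢ`. -/
noncomputable def d2 {n : ℕ} : P2 n →ₗ[A n] P1 n where
  toFun r := fun s => r * fox s
  map_add' r r' := by funext s; simp [add_mul]
  map_smul' r r' := by funext s; simp [mul_assoc, smul_eq_mul]

/-- The augmentation `ε : ℤG → ℤ`. -/
noncomputable def aug {n : ℕ} : A n →ₐ[ℤ] ℤ := MonoidAlgebra.lift ℤ ℤ (SurfaceGroup n) 1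

/-- The values of the action `θ` on the generators: `θ(aᵢ) = 1` for all `i`,
`θ(bᵢ) = 1` for `i ≤ n-1` and `θ(bₙ) = -1`. -/
def thetaGen {n : ℕ} : Gen n → ℤˣ
  | .inl _ => 1
  | .inr i => if (i : ℕ) = n - 1 then -1 else 1

theorem thetaGen_rel (n : ℕ) :
    ∀ r ∈ ({rel n} : Set (FreeGroup (Gen n))), FreeGroup.lift (thetaGen (n := n)) r = 1 := by
  intro r hr
  rw [Set.mem_singleton_iff] at hr
  subst hr
  rw [rel, map_list_prod]
  apply List.prod_eq_one
  intro x hx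
  rw [List.map_ofFn] at hx
  rw [List.mem_ofFn] at hx
  obtain ⟨i, rfl⟩ := hx
  rw [Function.comp_apply, map_commutatorElement]
  exact commutatorElement_eq_one_iff_commute.mpr (Commute.all _ _)

/-- The nontrivial action `θ : G → Aut(ℤ) = {±1}` with `θ(aᵢ) = 1`, `θ(bᵢ) = 1` for
`i < n` and `θ(bₙ) = -1`. -/
noncomputable def theta (n : ℕ) : SurfaceGroup n →* ℤˣ :=
  PresentedGroup.toGroup (thetaGen_rel n)

/-- The `ℤG`-module `ℤ̃`: the abelian group `ℤ` with `G` acting through `θ`. -/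
noncomputable def Ztilde (n : ℕ) : Rep ℤ (SurfaceGroup n) :=
  Rep.of ((DistribMulAction.toModuleEnd ℤ ℤ).comp (theta n))
set_option linter.dupNamespace false

open groupCohomology

variable {n : ℕ}

/-- The projection from the free group. -/
noncomputable def pi (n : ℕ) : FreeGroup (Gen n) →* SurfaceGroup n :=
  PresentedGroup.mk _

lemma pi_of (x : Gen n) : pi n (FreeGroup.of x) = PresentedGroup.of x := rfl

lemma pi_rel (n : ℕ) : pi n (rel n) = 1 := by
  apply (QuotientGroup.eq_one_iff _).2
  exact Subgroup.subset_normalClosure (Set.mem_singleton _)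

lemma theta_of (x : Gen n) : theta n (PresentedGroup.of x) = thetaGen x :=
  PresentedGroup.toGroup.of _

lemma theta_a (i : Fin n) : theta n (a i) = 1 := theta_of _

lemma theta_b (i : Fin n) : theta n (b i) = if (i : ℕ) = n - 1 then -1 else 1 := theta_of _

lemma theta_comm (g h : SurfaceGroup n) : theta n ⁅g, h⁆ = 1 := by
  rw [map_commutatorElement]
  exact commutatorElement_eq_one_iff_commute.mpr (Commute.all _ _)

lemma rho_apply (g : SurfaceGroup n) (x : ℤ) :
    ((Ztilde n).ρ g x : ℤ) = (theta n g : ℤ) * x := rfl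

lemma units_sq (u : ℤˣ) : (u : ℤ) * u = 1 := by
  rw [← Units.val_mul, Int.units_mul_self, Units.val_one]

section Crossed

variable {F : FreeGroup (Gen n) → ℤ}

lemma crossed_one (hF : ∀ w w', F (w * w') = F w + (theta n (pi n w) : ℤ) * F w') :
    F 1 = 0 := by
  have h := hF 1 1
  simp only [mul_one, map_one, Units.val_one, one_mul] at h
  linarith

lemma crossed_inv (hF : ∀ w w', F (w * w') = F w + (theta n (pi n w) : ℤ) * F w')
    (w : FreeGroup (Gen n)) :
    F w⁻¹ = -(theta n (pi n w) : ℤ) * F w := by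
  have h0 := crossed_one hF
  have h := hF w w⁻¹
  rw [mul_inv_cancel, h0] at h
  have hu := units_sq (theta n (pi n w))
  set u := (theta n (pi n w) : ℤ)
  linear_combination (-u) * h - F w⁻¹ * hu

lemma crossed_comm (hF : ∀ w w', F (w * w') = F w + (theta n (pi n w) : ℤ) * F w')
    (x y : FreeGroup (Gen n)) :
    F ⁅x, y⁆ = (1 - (theta n (pi n y) : ℤ)) * F x + ((theta n (pi n x) : ℤ) - 1) * F y := by
  have hx := crossed_inv hF x
  have hy := crossed_inv hF y
  have h1 := hF (x * y) x⁻¹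
  have h2 := hF (x * y * x⁻¹) y⁻¹
  have h3 := hF x y
  have hux := units_sq (theta n (pi n x))
  have huy := units_sq (theta n (pi n y))
  have h4 : (((theta n (pi n x))⁻¹ : ℤˣ) : ℤ) = (theta n (pi n x) : ℤ) := by
    rw [Int.units_inv_eq_self]
  show F (x * y * x⁻¹ * y⁻¹) = _
  rw [h2, h1, h3, hx, hy]
  simp only [map_mul, map_inv, Units.val_mul, h4]
  set u := (theta n (pi n x) : ℤ)
  set v := (theta n (pi n y) : ℤ)
  linear_combination (-v * F x - F y * v * v) * hux + (-F y) * huy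

lemma crossed_prod (hF : ∀ w w', F (w * w') = F w + (theta n (pi n w) : ℤ) * F w')
    (L : List (FreeGroup (Gen n))) (hL : ∀ w ∈ L, theta n (pi n w) = 1) :
    F L.prod = (L.map F).sum := by
  induction L with
  | nil => simpa using crossed_one hF
  | cons x L ih =>
      rw [List.prod_cons, hF, hL x (List.mem_cons_self),
        ih fun w hw => hL w (List.mem_cons_of_mem _ hw)]
      simp

lemma crossed_rel (hF : ∀ w w', F (w * w') = F w + (theta n (pi n w) : ℤ) * F w') :
    F (rel n) = ∑ i : Fin n, (1 - (thetaGen (Sum.inr i) : ℤ)) * F (.of (Sum.inl i)) := by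
  rw [rel, crossed_prod hF]
  · rw [List.map_ofFn, List.sum_ofFn]
    congr 1
    funext i
    rw [Function.comp_apply, crossed_comm hF, pi_of, pi_of, theta_of, theta_of]
    have : (thetaGen (Sum.inl i : Gen n)) = 1 := rfl
    rw [this]
    simp
  · intro w hw
    rw [List.mem_ofFn] at hw
    obtain ⟨i, rfl⟩ := hw
    rw [map_commutatorElement]
    exact theta_comm _ _

lemma crossed_rel_last {m : ℕ} {F : FreeGroup (Gen (m + 1)) → ℤ}
    (hF : ∀ w w', F (w * w') = F w + (theta (m+1) (pi (m+1) w) : ℤ) * F w') :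
    F (rel (m + 1)) = 2 * F (.of (Sum.inl (Fin.last m))) := by
  rw [crossed_rel hF]
  rw [Finset.sum_eq_single (Fin.last m)]
  · simp [thetaGen, Fin.last]
  · intro i _ hi
    have : ¬ ((i : ℕ) = m) := by
      intro h; exact hi (Fin.ext (by simpa using h))
    simp [thetaGen, this]
  · simp

end Crossed

/-- A normalized 2-cocycle on the surface group with values in `ℤ̃`. -/
structure NormCocycle (n : ℕ) where
  σ : SurfaceGroup n × SurfaceGroup n → ℤ
  h0 : ∀ g, σ (1, g) = 0
  h0' : ∀ g, σ (g, 1) = 0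
  hc : ∀ g h k, (theta n g : ℤ) * σ (h, k) - σ (g * h, k) + σ (g, h * k) - σ (g, h) = 0

/-- The extension of `G` by `ℤ̃` determined by a normalized cocycle. -/
def EC {n : ℕ} (_S : NormCocycle n) : Type := ℤ × SurfaceGroup n

/-- Constructor for `EC`. -/
def ecmk (S : NormCocycle n) (p : ℤ) (g : SurfaceGroup n) : EC S := (p, g)

namespace EC

variable {S : NormCocycle n}

noncomputable instance : Group (EC S) where
  mul x y := (x.1 + (theta n x.2 : ℤ) * y.1 + S.σ (x.2, y.2), x.2 * y.2)
  one := ((0 : ℤ), (1 : SurfaceGroup n))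
  inv x := (-(theta n x.2⁻¹ : ℤ) * x.1 - S.σ (x.2⁻¹, x.2), x.2⁻¹)
  mul_assoc x y z := by
    have hc := S.hc x.2 y.2 z.2
    refine Prod.ext ?_ (mul_assoc _ _ _)
    show x.1 + (theta n x.2 : ℤ) * y.1 + S.σ (x.2, y.2) +
        (theta n (x.2 * y.2) : ℤ) * z.1 + S.σ (x.2 * y.2, z.2) =
      x.1 + (theta n x.2 : ℤ) * (y.1 + (theta n y.2 : ℤ) * z.1 + S.σ (y.2, z.2)) +
        S.σ (x.2, y.2 * z.2)
    rw [map_mul, Units.val_mul]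
    ring_nf
    linarith [hc]
  one_mul x := by
    refine Prod.ext ?_ (one_mul _)
    show (0 : ℤ) + (theta n 1 : ℤ) * x.1 + S.σ (1, x.2) = x.1
    rw [map_one, S.h0]; simp
  mul_one x := by
    refine Prod.ext ?_ (mul_one _)
    show x.1 + (theta n x.2 : ℤ) * 0 + S.σ (x.2, 1) = x.1
    rw [S.h0']; simp
  inv_mul_cancel x := by
    refine Prod.ext ?_ (inv_mul_cancel _)
    show -(theta n x.2⁻¹ : ℤ) * x.1 - S.σ (x.2⁻¹, x.2) +
      (theta n x.2⁻¹ : ℤ) * x.1 + S.σ (x.2⁻¹, x.2) = 0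
    ring

lemma mul_def (x y : EC S) :
    x * y = (x.1 + (theta n x.2 : ℤ) * y.1 + S.σ (x.2, y.2), x.2 * y.2) := rfl

lemma one_def : (1 : EC S) = ((0 : ℤ), (1 : SurfaceGroup n)) := rfl

/-- The projection `E → G` as a group hom. -/
def esnd (S : NormCocycle n) : EC S →* SurfaceGroup n where
  toFun x := x.2
  map_one' := rfl
  map_mul' _ _ := rfl

/-- The set-theoretic lift of generators determined by `e`, as a hom on the free group. -/
noncomputable def epsi (S : NormCocycle n) (e : Gen n → ℤ) : FreeGroup (Gen n) →* EC S :=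
  FreeGroup.lift fun x => (ecmk S (e x) (PresentedGroup.of x))

lemma epsi_of (e : Gen n → ℤ) (x : Gen n) :
    epsi S e (FreeGroup.of x) = ecmk S (e x) (PresentedGroup.of x) :=
  FreeGroup.lift_apply_of

lemma esnd_epsi (e : Gen n → ℤ) (w : FreeGroup (Gen n)) :
    (epsi S e w).2 = pi n w := by
  have : (esnd S).comp (epsi S e) = pi n := by
    apply FreeGroup.ext_hom
    intro x
    simp [esnd, epsi_of, pi_of, ecmk]
  exact DFunLike.congr_fun this w

/-- Changing the lift changes the value on any word by a crossed homomorphism. -/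
lemma epsi_sub_crossed (e e' : Gen n → ℤ) (w w' : FreeGroup (Gen n)) :
    ((epsi S e (w * w')).1 - (epsi S e' (w * w')).1) =
      ((epsi S e w).1 - (epsi S e' w).1) +
        (theta n (pi n w) : ℤ) * ((epsi S e w').1 - (epsi S e' w').1) := by
  rw [map_mul, map_mul, mul_def, mul_def]
  simp only [esnd_epsi]
  ring

lemma epsi_rel_sub {m : ℕ} {S : NormCocycle (m + 1)} (e e' : Gen (m + 1) → ℤ) :
    (epsi S e (rel (m + 1))).1 - (epsi S e' (rel (m + 1))).1 =
      2 * (e (Sum.inl (Fin.last m)) - e' (Sum.inl (Fin.last m))) := by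
  have := crossed_rel_last (F := fun w => (epsi S e w).1 - (epsi S e' w).1)
    (fun w w' => epsi_sub_crossed e e' w w')
  simpa [epsi_of, ecmk] using this

end EC

namespace EC

/-- If the relator lifts to `1` in the extension, the extension splits:
the cocycle is a coboundary. -/
lemma split {S : NormCocycle n} (e : Gen n → ℤ)
    (h1 : epsi S e (rel n) = 1) :
    ∃ τ : SurfaceGroup n → ℤ,
      ∀ g h, S.σ (g, h) = τ (g * h) - τ g - (theta n g : ℤ) * τ h := by
  have hrel : ∀ r ∈ ({rel n} : Set (FreeGroup (Gen n))),
      FreeGroup.lift (fun x => ecmk S (e x) (PresentedGroup.of x)) r = 1 := by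
    intro r hr
    rw [Set.mem_singleton_iff] at hr
    subst hr
    exact h1
  set Φ := PresentedGroup.toGroup hrel with hΦ
  have hof : ∀ x : Gen n, Φ (PresentedGroup.of x) = ecmk S (e x) (PresentedGroup.of x) :=
    fun x => PresentedGroup.toGroup.of hrel
  have hsnd : ∀ g, (Φ g).2 = g := by
    have : (esnd S).comp Φ = MonoidHom.id _ := by
      apply PresentedGroup.ext
      intro x
      show ((Φ (PresentedGroup.of x)).2) = PresentedGroup.of x
      rw [hof]
      rfl
    exact fun g => DFunLike.congr_fun this g
  refine ⟨fun g => (Φ g).1, fun g h => ?_⟩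
  have := map_mul Φ g h
  rw [mul_def] at this
  have h1' := congrArg Prod.fst this
  simp only [hsnd] at h1'
  show S.σ (g, h) = (Φ (g * h)).1 - (Φ g).1 - (theta n g : ℤ) * (Φ h).1
  rw [h1']
  ring

/-- Conversely, if the cocycle is a coboundary, a suitable lift of the relator is `1`
(in its first coordinate). -/
lemma coboundary_epsi {S : NormCocycle n} (τ : SurfaceGroup n → ℤ) (hτ1 : τ 1 = 0)
    (hσ : ∀ g h, S.σ (g, h) = (theta n g : ℤ) * τ h - τ (g * h) + τ g) :
    (epsi S (fun x => -τ (PresentedGroup.of x)) (rel n)).1 = 0 := by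
  let χ : SurfaceGroup n →* EC S :=
    { toFun := fun g => ((-τ g, g) : EC S)
      map_one' := by
        rw [one_def]; exact Prod.ext (by simp [hτ1]) rfl
      map_mul' := fun g h => by
        refine Prod.ext ?_ rfl
        show -τ (g * h) = -τ g + (theta n g : ℤ) * (-τ h) + S.σ (g, h)
        rw [hσ]; ring }
  have : epsi S (fun x => -τ (PresentedGroup.of x)) = χ.comp (pi n) := by
    apply FreeGroup.ext_hom
    intro x
    rw [epsi_of]
    rfl
  rw [this]
  simp only [MonoidHom.comp_apply, pi_rel, map_one]
  rfl

end EC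

section Shim

variable {G : Type} [Group G]

/-- 1-coboundaries as a submodule of the 1-cocycles. -/
def oneCoboundaries (A : Rep ℤ G) : Submodule ℤ (cocycles₁ A) :=
  (AddSubgroup.comap (cocycles₁ A).subtype.toAddMonoidHom (coboundaries₁ A).toAddSubgroup).toIntSubmodule

lemma mem_oneCoboundaries_iff {A : Rep ℤ G} (f : cocycles₁ A) :
    f ∈ oneCoboundaries A ↔ ∃ x : A, ∀ g : G, A.ρ g x - x = f g := by
  change (∃ y, (d₀₁ A).hom y = (f : G → A)) ↔ _
  constructor
  · rintro ⟨x, hx⟩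
    exact ⟨x, fun g => congrFun hx g⟩
  · rintro ⟨x, hx⟩
    exact ⟨x, funext hx⟩

/-- 2-coboundaries as a submodule of the 2-cocycles. -/
def twoCoboundaries (A : Rep ℤ G) : Submodule ℤ (cocycles₂ A) :=
  (AddSubgroup.comap (cocycles₂ A).subtype.toAddMonoidHom (coboundaries₂ A).toAddSubgroup).toIntSubmodule

lemma mem_twoCoboundaries_iff {A : Rep ℤ G} (f : cocycles₂ A) :
    f ∈ twoCoboundaries A ↔
      ∃ x : G → A, ∀ g h : G, A.ρ g (x h) - x (g * h) + x g = f (g, h) := by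
  change (∃ y, (d₁₂ A).hom y = (f : G × G → A)) ↔ _
  constructor
  · rintro ⟨x, hx⟩
    exact ⟨x, fun g h => congrFun hx (g, h)⟩
  · rintro ⟨x, hx⟩
    exact ⟨x, funext fun p => hx p.1 p.2⟩

lemma h1ker (A : Rep ℤ G) :
    (oneCoboundaries A).toAddSubgroup = (H1π A).hom.toAddMonoidHom.ker := by
  ext x
  rw [AddMonoidHom.mem_ker]
  exact (H1π_eq_zero_iff x).symm

lemma h1surj (A : Rep ℤ G) : Function.Surjective (H1π A).hom.toAddMonoidHom :=
  (ModuleCat.epi_iff_surjective (H1π A)).1 inferInstance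

/-- `H¹` as a quotient. -/
noncomputable def h1q (A : Rep ℤ G) : (cocycles₁ A ⧸ oneCoboundaries A) ≃+ H1 A :=
  (QuotientAddGroup.quotientAddEquivOfEq (h1ker A)).trans
    (QuotientAddGroup.quotientKerEquivOfSurjective _ (h1surj A))

lemma h2ker (A : Rep ℤ G) :
    (twoCoboundaries A).toAddSubgroup = (H2π A).hom.toAddMonoidHom.ker := by
  ext x
  rw [AddMonoidHom.mem_ker]
  exact (H2π_eq_zero_iff x).symm

lemma h2surj (A : Rep ℤ G) : Function.Surjective (H2π A).hom.toAddMonoidHom :=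
  (ModuleCat.epi_iff_surjective (H2π A)).1 inferInstance

/-- `H²` as a quotient. -/
noncomputable def h2q (A : Rep ℤ G) : (cocycles₂ A ⧸ twoCoboundaries A) ≃+ H2 A :=
  (QuotientAddGroup.quotientAddEquivOfEq (h2ker A)).trans
    (QuotientAddGroup.quotientKerEquivOfSurjective _ (h2surj A))

end Shim

section Normalize

/-- The values of a 2-cochain as an integer-valued function. -/
def cval2 (f : cocycles₂ (Ztilde n)) :
    SurfaceGroup n × SurfaceGroup n → ℤ := f.1

/-- Normalization of a 2-cocycle. -/
noncomputable def normalize (f : cocycles₂ (Ztilde n)) : NormCocycle n where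
  σ := fun p => cval2 f p - (theta n p.1 : ℤ) * cval2 f (1, 1)
  h0 := fun g => by
    have h : cval2 f (1, g) = cval2 f (1, 1) := groupCohomology.cocycles₂_map_one_fst f g
    dsimp only
    rw [h, map_one]
    simp
  h0' := fun g => by
    have h := groupCohomology.cocycles₂_map_one_snd f g
    erw [rho_apply] at h
    have h' : cval2 f (g, 1) = (theta n g : ℤ) * cval2 f (1, 1) := h
    dsimp only
    rw [h']
    ring
  hc := fun g h k => by
    have hf := (groupCohomology.mem_cocycles₂_def f.1).1 f.2 g h k
    erw [rho_apply] at hf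
    have hf' : (theta n g : ℤ) * cval2 f (h, k) - cval2 f (g * h, k) + cval2 f (g, h * k)
        - cval2 f (g, h) = 0 := hf
    dsimp only
    rw [map_mul, Units.val_mul]
    linarith [hf']

/-- The obstruction number of a 2-cocycle: the first coordinate of the image of the
relator under the canonical lift into the extension. -/
noncomputable def cz (f : cocycles₂ (Ztilde n)) : ℤ :=
  (EC.epsi (normalize f) (fun _ => 0) (rel n)).1

end Normalize

section OneCocycles

open groupCohomology

/-- Integer values of a 1-cochain. -/
def cval1 (f : cocycles₁ (Ztilde n)) : SurfaceGroup n → ℤ := f.1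

lemma cval1_mul (f : cocycles₁ (Ztilde n)) (g h : SurfaceGroup n) :
    cval1 f (g * h) = (theta n g : ℤ) * cval1 f h + cval1 f g := by
  have := (mem_cocycles₁_iff f.1).1 f.2 g h
  erw [rho_apply] at this
  exact this

lemma cval1_one (f : cocycles₁ (Ztilde n)) : cval1 f 1 = 0 :=
  cocycles₁_map_one f

lemma cval1_inv (f : cocycles₁ (Ztilde n)) (g : SurfaceGroup n) :
    cval1 f g⁻¹ = -(theta n g : ℤ) * cval1 f g := by
  have h : (theta n g : ℤ) * cval1 f g⁻¹ = -cval1 f g := by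
    have := cocycles₁_map_inv f g
    erw [rho_apply] at this
    exact this
  have hu := units_sq (theta n g)
  set u := (theta n g : ℤ)
  linear_combination u * h - cval1 f g⁻¹ * hu

lemma cval1_comm (f : cocycles₁ (Ztilde n)) (g h : SurfaceGroup n) :
    cval1 f ⁅g, h⁆ = (1 - (theta n h : ℤ)) * cval1 f g +
      ((theta n g : ℤ) - 1) * cval1 f h := by
  have hg := cval1_inv f g
  have hh := cval1_inv f h
  have h1 := cval1_mul f (g * h) g⁻¹
  have h2 := cval1_mul f (g * h * g⁻¹) h⁻¹
  have h3 := cval1_mul f g h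
  have hux := units_sq (theta n g)
  have huy := units_sq (theta n h)
  have h4 : (((theta n g)⁻¹ : ℤˣ) : ℤ) = (theta n g : ℤ) := by
    rw [Int.units_inv_eq_self]
  show cval1 f (g * h * g⁻¹ * h⁻¹) = _
  rw [h2, h1, h3, hg, hh]
  simp only [map_mul, map_inv, Units.val_mul, h4]
  set u := (theta n g : ℤ)
  set v := (theta n h : ℤ)
  linear_combination (-v * cval1 f g - cval1 f h * v * v) * hux + (-(cval1 f h)) * huy

/-- Two 1-cocycles agreeing on the generators agree everywhere. -/
lemma oneCocycles_ext_of_gen {f f' : cocycles₁ (Ztilde n)}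
    (h : ∀ x : Gen n, cval1 f (PresentedGroup.of x) = cval1 f' (PresentedGroup.of x)) :
    f = f' := by
  let S : Subgroup (SurfaceGroup n) :=
    { carrier := {g | cval1 f g = cval1 f' g}
      one_mem' := by simp only [Set.mem_setOf_eq, cval1_one]
      mul_mem' := by
        intro u v hu hv
        simp only [Set.mem_setOf_eq, cval1_mul] at *
        rw [hu, hv]
      inv_mem' := by
        intro u hu
        simp only [Set.mem_setOf_eq, cval1_inv] at *
        rw [hu] }
  have hS : ∀ g, g ∈ S := fun g => PresentedGroup.generated_by _ S (fun x => h x) g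
  apply Subtype.ext
  funext g
  exact hS g

/-- The trivial normalized cocycle. -/
def S0 (n : ℕ) : NormCocycle n where
  σ := fun _ => 0
  h0 := fun _ => rfl
  h0' := fun _ => rfl
  hc := fun _ _ _ => by simp

/-- The canonical splitting of the trivial extension. -/
def iota (n : ℕ) : SurfaceGroup n →* EC (S0 n) where
  toFun g := ecmk (S0 n) 0 g
  map_one' := rfl
  map_mul' g h := by
    rw [EC.mul_def]
    refine Prod.ext ?_ rfl
    show (0 : ℤ) = 0 + (theta n g : ℤ) * 0 + (0 : ℤ)
    ring

lemma epsi_S0_rel (n : ℕ) : (EC.epsi (S0 n) (fun _ => 0) (rel n)).1 = 0 := by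
  have : EC.epsi (S0 n) (fun _ => 0) = (iota n).comp (pi n) := by
    apply FreeGroup.ext_hom
    intro x
    rw [EC.epsi_of]
    rfl
  rw [this]
  simp only [MonoidHom.comp_apply, pi_rel, map_one]
  rfl

/-- Construction of a 1-cocycle with prescribed values on generators. -/
lemma exists_oneCocycle {m : ℕ} (v : Gen (m + 1) → ℤ) (hv : v (Sum.inl (Fin.last m)) = 0) :
    ∃ f : cocycles₁ (Ztilde (m + 1)), ∀ x, cval1 f (PresentedGroup.of x) = v x := by
  have hrel : ∀ r ∈ ({rel (m+1)} : Set (FreeGroup (Gen (m+1)))),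
      FreeGroup.lift (fun x => ecmk (S0 (m+1)) (v x) (PresentedGroup.of x)) r = 1 := by
    intro r hr
    rw [Set.mem_singleton_iff] at hr
    subst hr
    show EC.epsi (S0 (m+1)) v (rel (m+1)) = 1
    have hfst := EC.epsi_rel_sub (S := S0 (m+1)) v (fun _ => 0)
    rw [epsi_S0_rel, hv] at hfst
    refine Prod.ext ?_ ?_
    · show (EC.epsi (S0 (m+1)) v (rel (m+1))).1 = 0
      simpa using hfst
    · show (EC.epsi (S0 (m+1)) v (rel (m+1))).2 = 1
      rw [EC.esnd_epsi, pi_rel]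
  set Φ := PresentedGroup.toGroup hrel with hΦ
  have hof : ∀ x : Gen (m+1), Φ (PresentedGroup.of x) =
      ecmk (S0 (m+1)) (v x) (PresentedGroup.of x) :=
    fun x => PresentedGroup.toGroup.of hrel
  have hsnd : ∀ g, (Φ g).2 = g := by
    have : (EC.esnd (S0 (m+1))).comp Φ = MonoidHom.id _ := by
      apply PresentedGroup.ext
      intro x
      show ((Φ (PresentedGroup.of x)).2) = PresentedGroup.of x
      rw [hof]
      rfl
    exact fun g => DFunLike.congr_fun this g
  have hmem : (fun g => (Φ g).1) ∈ cocycles₁ (Ztilde (m+1)) := by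
    refine (mem_cocycles₁_iff (A := Ztilde (m+1)) (fun g => (Φ g).1)).2 ?_
    intro g h
    have := map_mul Φ g h
    rw [EC.mul_def] at this
    have h1' := congrArg Prod.fst this
    simp only [hsnd] at h1'
    have goal' : (Φ (g * h)).1 = (theta (m+1) g : ℤ) * (Φ h).1 + (Φ g).1 := by
      rw [h1']
      show (Φ g).1 + (theta (m+1) g : ℤ) * (Φ h).1 + (0 : ℤ) = _
      ring
    exact goal'
  refine ⟨⟨fun g => (Φ g).1, hmem⟩, fun x => ?_⟩
  show (Φ (PresentedGroup.of x)).1 = v x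
  rw [hof]
  rfl

end OneCocycles

section CZ

open groupCohomology

variable {m : ℕ}

lemma epsi_zero_add {S S' S'' : NormCocycle (m + 1)}
    (hσ : ∀ p, S''.σ p = S.σ p + S'.σ p) :
    (EC.epsi S'' (fun _ => 0) (rel (m + 1))).1 =
      (EC.epsi S (fun _ => 0) (rel (m + 1))).1 +
        (EC.epsi S' (fun _ => 0) (rel (m + 1))).1 := by
  set F : FreeGroup (Gen (m + 1)) → ℤ := fun w =>
    (EC.epsi S'' (fun _ => 0) w).1 - (EC.epsi S (fun _ => 0) w).1 -
      (EC.epsi S' (fun _ => 0) w).1 with hFdef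
  have hF : ∀ w w', F (w * w') = F w + (theta (m+1) (pi (m+1) w) : ℤ) * F w' := by
    intro w w'
    simp only [hFdef, map_mul, EC.mul_def, EC.esnd_epsi, hσ]
    ring
  have h := crossed_rel_last hF
  have h0 : F (.of (Sum.inl (Fin.last m))) = 0 := by
    simp only [hFdef, EC.epsi_of]
    show (0 : ℤ) - 0 - 0 = 0
    ring
  rw [h0, mul_zero] at h
  have : F (rel (m + 1)) = 0 := h
  rw [hFdef] at this
  dsimp only at this
  linarith

lemma cval2_add (f f' : cocycles₂ (Ztilde (m + 1))) (p) :
    cval2 (f + f') p = cval2 f p + cval2 f' p := rfl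

lemma cz_add (f f' : cocycles₂ (Ztilde (m + 1))) :
    cz (f + f') = cz f + cz f' := by
  apply epsi_zero_add
  intro p
  show cval2 (f + f') p - (theta (m+1) p.1 : ℤ) * cval2 (f + f') (1, 1) = _
  rw [cval2_add, cval2_add]
  show _ = (cval2 f p - (theta (m+1) p.1 : ℤ) * cval2 f (1, 1)) +
    (cval2 f' p - (theta (m+1) p.1 : ℤ) * cval2 f' (1, 1))
  ring

lemma cz_zero : cz (0 : cocycles₂ (Ztilde (m + 1))) = 0 := by
  have h := cz_add (0 : cocycles₂ (Ztilde (m + 1))) 0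
  rw [add_zero] at h
  linarith

lemma cz_of_coboundary (f : cocycles₂ (Ztilde (m + 1)))
    (hf : f ∈ twoCoboundaries (Ztilde (m + 1))) : ∃ t, cz f = 2 * t := by
  rw [mem_twoCoboundaries_iff] at hf
  obtain ⟨x, hx⟩ := hf
  set xz : SurfaceGroup (m + 1) → ℤ := x with hxz
  have hx' : ∀ g h, (theta (m+1) g : ℤ) * xz h - xz (g * h) + xz g = cval2 f (g, h) := by
    intro g h
    have h2 := hx g h
    erw [rho_apply] at h2
    exact h2
  have h11 : cval2 f (1, 1) = xz 1 := by
    have := hx' 1 1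
    rw [map_one] at this
    simpa using this.symm
  set τ : SurfaceGroup (m + 1) → ℤ := fun g => xz g - xz 1 with hτ
  have hτ1 : τ 1 = 0 := by simp [hτ]
  have hσ : ∀ g h, (normalize f).σ (g, h) =
      (theta (m+1) g : ℤ) * τ h - τ (g * h) + τ g := by
    intro g h
    show cval2 f (g, h) - (theta (m+1) g : ℤ) * cval2 f (1, 1) = _
    rw [← hx' g h, h11]
    simp only [hτ]
    ring
  have h0 := EC.coboundary_epsi (S := normalize f) τ hτ1 hσ
  have hsub := EC.epsi_rel_sub (S := normalize f) (fun _ => 0)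
    (fun x => -τ (PresentedGroup.of x))
  rw [h0] at hsub
  refine ⟨τ (PresentedGroup.of (Sum.inl (Fin.last m))), ?_⟩
  show cz f = _
  rw [cz]
  omega

lemma cz_even_coboundary (f : cocycles₂ (Ztilde (m + 1))) (t : ℤ)
    (h : cz f = 2 * t) : f ∈ twoCoboundaries (Ztilde (m + 1)) := by
  set e : Gen (m + 1) → ℤ := fun x => if x = Sum.inl (Fin.last m) then -t else 0 with he
  have h1 : EC.epsi (normalize f) e (rel (m + 1)) = 1 := by
    have hsub := EC.epsi_rel_sub (S := normalize f) e (fun _ => 0)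
    refine Prod.ext ?_ ?_
    · show (EC.epsi (normalize f) e (rel (m + 1))).1 = 0
      have h2 : (EC.epsi (normalize f) (fun _ => 0) (rel (m + 1))).1 = cz f := rfl
      rw [h2, h] at hsub
      simp only [he, if_pos rfl] at hsub
      linarith [hsub]
    · show (EC.epsi (normalize f) e (rel (m + 1))).2 = 1
      rw [EC.esnd_epsi, pi_rel]
  obtain ⟨τ, hτ⟩ := EC.split e h1
  rw [mem_twoCoboundaries_iff]
  refine ⟨fun g => ((-τ g + cval2 f (1, 1) : ℤ)), fun g h => ?_⟩
  have hσ' : (normalize f).σ (g, h) =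
      cval2 f (g, h) - (theta (m+1) g : ℤ) * cval2 f (1, 1) := rfl
  have hstep : (theta (m+1) g : ℤ) * (-τ h + cval2 f (1, 1)) -
      (-τ (g * h) + cval2 f (1, 1)) + (-τ g + cval2 f (1, 1)) = cval2 f (g, h) := by
    have h2 := hτ g h
    rw [hσ'] at h2
    linarith [h2]
  exact hstep

end CZ

section Surj

open groupCohomology

variable {m : ℕ}

/-- The homomorphism `G → ℤ` sending `aₙ ↦ 1` and all other generators to `0`. -/
noncomputable def beta (m : ℕ) : SurfaceGroup (m + 1) →* Multiplicative ℤ :=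
  PresentedGroup.toGroup (f := fun x =>
    Multiplicative.ofAdd (if x = Sum.inl (Fin.last m) then (1 : ℤ) else 0)) (by
  intro r hr
  rw [Set.mem_singleton_iff] at hr
  subst hr
  rw [rel, map_list_prod]
  apply List.prod_eq_one
  intro x hx
  rw [List.map_ofFn] at hx
  rw [List.mem_ofFn] at hx
  obtain ⟨i, rfl⟩ := hx
  rw [Function.comp_apply, map_commutatorElement]
  exact commutatorElement_eq_one_iff_commute.mpr (Commute.all _ _))

/-- Integer-valued version of `beta`. -/
noncomputable def betaz (m : ℕ) (g : SurfaceGroup (m + 1)) : ℤ :=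
  Multiplicative.toAdd (beta m g)

lemma betaz_mul (g h : SurfaceGroup (m + 1)) :
    betaz m (g * h) = betaz m g + betaz m h := by
  simp [betaz, map_mul]

lemma betaz_inv (g : SurfaceGroup (m + 1)) : betaz m g⁻¹ = -betaz m g := by
  simp [betaz, map_inv]

lemma betaz_of (x : Gen (m + 1)) :
    betaz m (PresentedGroup.of x) = if x = Sum.inl (Fin.last m) then 1 else 0 := by
  rw [betaz, beta, PresentedGroup.toGroup.of]
  rfl

lemma betaz_a (i : Fin (m + 1)) :
    betaz m (a i) = if i = Fin.last m then 1 else 0 := by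
  rw [a, betaz_of]
  simp

lemma betaz_b (i : Fin (m + 1)) : betaz m (b i) = 0 := by
  rw [b, betaz_of]
  simp

/-- The 1-cocycle with `α(aᵢ) = 0`, `α(bᵢ) = δ_{i,n}`. -/
noncomputable def alph (m : ℕ) : cocycles₁ (Ztilde (m + 1)) :=
  (exists_oneCocycle (fun x => if x = Sum.inr (Fin.last m) then 1 else 0) (by simp)).choose

lemma alph_of (x : Gen (m + 1)) :
    cval1 (alph m) (PresentedGroup.of x) = if x = Sum.inr (Fin.last m) then 1 else 0 :=
  (exists_oneCocycle (fun x => if x = Sum.inr (Fin.last m) then 1 else 0) (by simp)).choose_spec x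

lemma alph_a (i : Fin (m + 1)) : cval1 (alph m) (a i) = 0 := by
  rw [a, alph_of]; simp

lemma alph_b (i : Fin (m + 1)) :
    cval1 (alph m) (b i) = if i = Fin.last m then 1 else 0 := by
  rw [b, alph_of]; simp

/-- The cup-product 2-cocycle `σ₀(g, h) = α(g)β(h)`. -/
noncomputable def f0 (m : ℕ) : cocycles₂ (Ztilde (m + 1)) :=
  ⟨fun p => (cval1 (alph m) p.1 * betaz m p.2 : ℤ), by
    refine (mem_cocycles₂_def (A := Ztilde (m+1))
      (fun p => (cval1 (alph m) p.1 * betaz m p.2 : ℤ))).2 ?_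
    intro g h j
    have key : (theta (m+1) g : ℤ) * (cval1 (alph m) h * betaz m j) -
        cval1 (alph m) (g * h) * betaz m j +
        cval1 (alph m) g * betaz m (h * j) - cval1 (alph m) g * betaz m h = 0 := by
      rw [cval1_mul, betaz_mul]
      ring
    show (Ztilde (m+1)).ρ g _ - _ + _ - _ = _
    rw [rho_apply]
    exact key⟩

lemma cval2_f0 (p) : cval2 (f0 m) p = cval1 (alph m) p.1 * betaz m p.2 := rfl

lemma normalize_f0 (p) :
    (normalize (f0 m)).σ p = cval1 (alph m) p.1 * betaz m p.2 := by
  show cval2 (f0 m) p - (theta (m+1) p.1 : ℤ) * cval2 (f0 m) (1, 1) = _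
  rw [cval2_f0, cval2_f0]
  rw [cval1_one]
  ring

end Surj

namespace EC

variable {S : NormCocycle n}

lemma mul_fst (x y : EC S) :
    (x * y).1 = x.1 + (theta n x.2 : ℤ) * y.1 + S.σ (x.2, y.2) := rfl

lemma mul_snd (x y : EC S) : (x * y).2 = x.2 * y.2 := rfl

lemma inv_fst (x : EC S) :
    (x⁻¹).1 = -(theta n x.2⁻¹ : ℤ) * x.1 - S.σ (x.2⁻¹, x.2) := rfl

lemma inv_snd (x : EC S) : (x⁻¹).2 = x.2⁻¹ := rfl

end EC

lemma ecmk_fst {S : NormCocycle n} (p : ℤ) (g : SurfaceGroup n) : (ecmk S p g).1 = p := rfl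

lemma ecmk_snd {S : NormCocycle n} (p : ℤ) (g : SurfaceGroup n) : (ecmk S p g).2 = g := rfl

lemma theta_inv {g : SurfaceGroup n} : (theta n g⁻¹ : ℤ) = (theta n g : ℤ) := by
  rw [map_inv, Int.units_inv_eq_self]

section Comp

open groupCohomology

variable {m : ℕ}

lemma epsi_f0_comm (i : Fin (m + 1)) :
    EC.epsi (normalize (f0 m)) (fun _ => 0)
        ⁅(FreeGroup.of (Sum.inl i) : FreeGroup (Gen (m+1))), FreeGroup.of (Sum.inr i)⁆ =
      ecmk (normalize (f0 m)) (-(if i = Fin.last m then 1 else 0)) ⁅a i, b i⁆ := by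
  rw [map_commutatorElement, EC.epsi_of, EC.epsi_of]
  rw [commutatorElement_def, commutatorElement_def]
  have ha : (PresentedGroup.of (Sum.inl i) : SurfaceGroup (m+1)) = a i := rfl
  have hb : (PresentedGroup.of (Sum.inr i) : SurfaceGroup (m+1)) = b i := rfl
  refine Prod.ext ?_ ?_
  · simp only [EC.mul_fst, EC.mul_snd, EC.inv_fst, EC.inv_snd, ecmk_fst, ecmk_snd, ha, hb,
      normalize_f0]
    simp only [theta_inv, map_mul, Units.val_mul, cval1_inv, cval1_mul, betaz_inv, betaz_mul,
      alph_a, alph_b, betaz_a, betaz_b, theta_a, Units.val_one]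
    by_cases hi : i = Fin.last m <;> simp [hi]
  · simp only [EC.mul_snd, EC.inv_snd, ecmk_snd, ha, hb]

lemma prod_ecmk {S : NormCocycle (m + 1)}
    (hS : ∀ p, S.σ p = cval1 (alph m) p.1 * betaz m p.2)
    (L : List (ℤ × SurfaceGroup (m + 1)))
    (hα : ∀ z ∈ L, cval1 (alph m) z.2 = 0)
    (hθ : ∀ z ∈ L, theta (m + 1) z.2 = 1) :
    ((L.map fun z => ecmk S z.1 z.2).prod).1 = (L.map Prod.fst).sum := by
  induction L with
  | nil => rfl
  | cons z L ih =>
      rw [List.map_cons, List.prod_cons, List.map_cons, List.sum_cons]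
      rw [EC.mul_fst, ecmk_fst, ecmk_snd, hS, hα z (List.mem_cons_self),
        hθ z (List.mem_cons_self),
        ih (fun w hw => hα w (List.mem_cons_of_mem _ hw))
          (fun w hw => hθ w (List.mem_cons_of_mem _ hw))]
      simp

lemma cz_f0 : cz (f0 m) = -1 := by
  rw [cz, rel, map_list_prod, List.map_ofFn]
  have hmap : List.ofFn ((EC.epsi (normalize (f0 m)) (fun _ => 0)) ∘ fun i : Fin (m+1) =>
      ⁅(FreeGroup.of (Sum.inl i) : FreeGroup (Gen (m+1))), FreeGroup.of (Sum.inr i)⁆) =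
      List.map (fun z => ecmk (normalize (f0 m)) z.1 z.2)
        (List.ofFn fun i : Fin (m+1) =>
          ((-(if i = Fin.last m then 1 else 0) : ℤ), ⁅a i, b i⁆)) := by
    rw [List.map_ofFn]
    congr 1
    funext i
    rw [Function.comp_apply, Function.comp_apply, epsi_f0_comm]
  rw [hmap]
  rw [prod_ecmk normalize_f0]
  · rw [List.map_ofFn, List.sum_ofFn]
    simp only [Function.comp_apply]
    rw [show (∑ i : Fin (m+1), (-(if i = Fin.last m then 1 else 0) : ℤ)) =
      ∑ i : Fin (m+1), (if i = Fin.last m then (-1 : ℤ) else 0) from by congr 1; funext i; by_cases hi : i = Fin.last m <;> simp [hi]]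
    rw [Finset.sum_ite_eq' Finset.univ (Fin.last m) (fun _ => (-1 : ℤ))]
    simp
  · intro z hz
    rw [List.mem_ofFn] at hz
    obtain ⟨i, rfl⟩ := hz
    show cval1 (alph m) ⁅a i, b i⁆ = 0
    rw [cval1_comm, alph_a, theta_a]
    simp
  · intro z hz
    rw [List.mem_ofFn] at hz
    obtain ⟨i, rfl⟩ := hz
    exact theta_comm _ _

end Comp

section Assemble

open groupCohomology

variable {m : ℕ}

/-- An isomorphism of `ℤ`-modules as an additive equivalence (avoiding instance diamonds). -/
def modIsoToAddEquiv {X Y : ModuleCat ℤ} (i : X ≅ Y) : X ≃+ Y where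
  toFun := i.hom.hom
  invFun := i.inv.hom
  left_inv := fun x => by
    simp
  right_inv := fun y => by
    simp
  map_add' := map_add i.hom.hom

/-- The mod-2 obstruction map on 2-cocycles. -/
noncomputable def CbarHom (m : ℕ) : cocycles₂ (Ztilde (m + 1)) →ₗ[ℤ] ZMod 2 :=
  AddMonoidHom.toIntLinearMap
    { toFun := fun f => ((cz f : ℤ) : ZMod 2)
      map_zero' := by
        show ((cz (0 : cocycles₂ (Ztilde (m+1))) : ℤ) : ZMod 2) = 0
        rw [cz_zero]; norm_num
      map_add' := fun f f' => by
        show ((cz (f + f') : ℤ) : ZMod 2) = ((cz f : ℤ) : ZMod 2) + ((cz f' : ℤ) : ZMod 2)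
        rw [cz_add]; push_cast; ring }

lemma CbarHom_apply (f : cocycles₂ (Ztilde (m + 1))) :
    CbarHom m f = ((cz f : ℤ) : ZMod 2) := rfl

lemma CbarHom_ker : LinearMap.ker (CbarHom m) = twoCoboundaries (Ztilde (m + 1)) := by
  ext f
  simp only [LinearMap.mem_ker, CbarHom_apply]
  constructor
  · intro h
    have h2 : ((2 : ℕ) : ℤ) ∣ cz f := (ZMod.intCast_zmod_eq_zero_iff_dvd _ _).1 h
    obtain ⟨t, ht⟩ := h2
    exact cz_even_coboundary f t (by push_cast at ht; linarith)
  · intro h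
    obtain ⟨t, ht⟩ := cz_of_coboundary f h
    apply (ZMod.intCast_zmod_eq_zero_iff_dvd _ _).2
    exact ⟨t, by push_cast; linarith⟩

lemma CbarHom_surj : Function.Surjective (CbarHom m) := by
  intro y
  have hy : ∀ z : ZMod 2, z = 0 ∨ z = 1 := by decide
  rcases hy y with rfl | rfl
  · exact ⟨0, map_zero _⟩
  · refine ⟨f0 m, ?_⟩
    rw [CbarHom_apply, cz_f0]
    decide

/-- The second cohomology of `ℤ̃` is `ℤ/2`. -/
noncomputable def h2equiv (m : ℕ) : groupCohomology (Ztilde (m + 1)) 2 ≃+ ZMod 2 :=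
  (h2q (Ztilde (m + 1))).symm.trans
    ((Submodule.quotEquivOfEq _ _ CbarHom_ker.symm).toAddEquiv.trans
      ((CbarHom m).quotKerEquivOfSurjective CbarHom_surj).toAddEquiv)

/-- The generator indexing away from the last handle. -/
def idx (m : ℕ) (j : Fin (2 * m)) : Gen (m + 1) :=
  if h : (j : ℕ) < m then Sum.inl ⟨(j : ℕ), by omega⟩
  else Sum.inr ⟨(j : ℕ) - m, by have := j.2; omega⟩

lemma thetaGen_idx (j : Fin (2 * m)) : (thetaGen (idx m j) : ℤˣ) = 1 := by
  rw [idx]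
  split
  · rfl
  · have h2 := j.2
    have hne : ¬(((j : ℕ) - m : ℕ) = m) := by omega
    simp [thetaGen, hne]

lemma idx_inr (i : Fin (m + 1)) (hi : (i : ℕ) < m) :
    idx m ⟨m + (i : ℕ), by omega⟩ = Sum.inr i := by
  rw [idx, dif_neg (by simp)]
  congr 1
  apply Fin.ext
  show (m + (i : ℕ)) - m = (i : ℕ)
  omega

lemma cval1_add (f f' : cocycles₁ (Ztilde (m + 1))) (g : SurfaceGroup (m + 1)) :
    cval1 (f + f') g = cval1 f g + cval1 f' g := rfl

lemma cval1_smul (r : ℤ) (f : cocycles₁ (Ztilde (m + 1))) (g : SurfaceGroup (m + 1)) :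
    cval1 (r • f) g = r * cval1 f g := rfl

/-- The map sending a 1-cocycle to its values on the generators. -/
noncomputable def Psi (m : ℕ) :
    cocycles₁ (Ztilde (m + 1)) →ₗ[ℤ] (Fin (2 * m) → ℤ) × ZMod 2 where
  toFun f := (fun j => cval1 f (PresentedGroup.of (idx m j)),
    ((cval1 f (b (Fin.last m)) : ℤ) : ZMod 2))
  map_add' f f' := by
    refine Prod.ext ?_ ?_
    · funext j
      show cval1 (f + f') _ = cval1 f _ + cval1 f' _
      rw [cval1_add]
    · show ((cval1 (f + f') _ : ℤ) : ZMod 2) = _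
      rw [cval1_add]
      push_cast
      rfl
  map_smul' r f := by
    refine Prod.ext ?_ ?_
    · funext j
      show cval1 (r • f) _ = r • cval1 f _
      rw [cval1_smul, smul_eq_mul]
    · show ((cval1 (r • f) _ : ℤ) : ZMod 2) = r • ((cval1 f _ : ℤ) : ZMod 2)
      rw [cval1_smul, zsmul_eq_mul]
      push_cast
      ring

lemma Psi_ker : LinearMap.ker (Psi m) = oneCoboundaries (Ztilde (m + 1)) := by
  ext f
  simp only [LinearMap.mem_ker]
  constructor
  · intro hf
    have h1 : ∀ j : Fin (2 * m), cval1 f (PresentedGroup.of (idx m j)) = 0 :=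
      fun j => congrFun (congrArg Prod.fst hf) j
    have h2 : ((cval1 f (b (Fin.last m)) : ℤ) : ZMod 2) = 0 := congrArg Prod.snd hf
    have hcr : ∀ w w' : FreeGroup (Gen (m + 1)),
        cval1 f (pi (m+1) (w * w')) =
          cval1 f (pi (m+1) w) + (theta (m+1) (pi (m+1) w) : ℤ) * cval1 f (pi (m+1) w') := by
      intro w w'
      rw [map_mul, cval1_mul]
      ring
    have hlast : cval1 f (a (Fin.last m)) = 0 := by
      have h : cval1 f (pi (m+1) (rel (m+1))) =
          2 * cval1 f (pi (m+1) (FreeGroup.of (Sum.inl (Fin.last m)))) :=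
        crossed_rel_last (F := fun w => cval1 f (pi (m+1) w)) hcr
      have h0 : cval1 f (pi (m+1) (rel (m+1))) = 0 := by rw [pi_rel, cval1_one]
      have h1' : cval1 f (pi (m+1) (FreeGroup.of (Sum.inl (Fin.last m)))) =
          cval1 f (a (Fin.last m)) := rfl
      rw [h0, h1'] at h
      linarith
    obtain ⟨t, ht⟩ : ∃ t, cval1 f (b (Fin.last m)) = 2 * t := by
      obtain ⟨t, ht⟩ := (ZMod.intCast_zmod_eq_zero_iff_dvd _ 2).1 h2
      exact ⟨t, by push_cast at ht; linarith⟩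
    have hmem' : d₀₁ (Ztilde (m+1)) (-t) ∈ cocycles₁ (Ztilde (m+1)) :=
      d₀₁_apply_mem_cocycles₁ (A := Ztilde (m+1)) (-t)
    set f' : cocycles₁ (Ztilde (m+1)) := ⟨d₀₁ (Ztilde (m+1)) (-t), hmem'⟩ with hf'def
    have hf'val : ∀ g : SurfaceGroup (m+1), cval1 f' g = (theta (m+1) g : ℤ) * (-t) - (-t) := by
      intro g
      rfl
    have hgen : ∀ y : Gen (m + 1),
        cval1 f' (PresentedGroup.of y) = cval1 f (PresentedGroup.of y) := by
      intro y
      rw [hf'val, theta_of]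
      match y with
      | Sum.inl i =>
          have h5 : ((thetaGen (Sum.inl i : Gen (m+1)) : ℤˣ) : ℤ) = 1 := rfl
          rw [h5]
          by_cases hi : (i : ℕ) < m
          · have h6 := h1 ⟨(i : ℕ), by omega⟩
            rw [idx, dif_pos hi] at h6
            simp only [Fin.eta] at h6
            rw [h6]
            ring
          · have hi' : i = Fin.last m := by
              apply Fin.ext
              have := i.2
              simp only [Fin.val_last]
              omega
            rw [hi',
              show (PresentedGroup.of (Sum.inl (Fin.last m)) : SurfaceGroup (m+1)) =
                a (Fin.last m) from rfl, hlast]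
            ring
      | Sum.inr i =>
          by_cases hi : (i : ℕ) < m
          · have hne : ¬((i : ℕ) = m) := by omega
            have h5 : ((thetaGen (Sum.inr i : Gen (m+1)) : ℤˣ) : ℤ) = 1 := by
              simp [thetaGen, hne]
            rw [h5]
            have h6 := h1 ⟨m + (i : ℕ), by omega⟩
            rw [idx_inr i hi] at h6
            rw [h6]
            ring
          · have hi' : i = Fin.last m := by
              apply Fin.ext
              have := i.2
              simp only [Fin.val_last]
              omega
            have h5 : ((thetaGen (Sum.inr (Fin.last m) : Gen (m+1)) : ℤˣ) : ℤ) = -1 := by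
              simp [thetaGen]
            rw [hi', h5]
            have h6 : cval1 f (PresentedGroup.of (Sum.inr (Fin.last m))) = 2 * t := ht
            rw [h6]
            ring
    have heq : f' = f := oneCocycles_ext_of_gen hgen
    rw [mem_oneCoboundaries_iff]
    exact ⟨-t, fun g => by rw [← heq]; rfl⟩
  · intro hf
    rw [mem_oneCoboundaries_iff] at hf
    obtain ⟨x, hx⟩ := hf
    set xz : ℤ := x with hxzdef
    have hx2 : ∀ g, (theta (m+1) g : ℤ) * xz - xz = cval1 f g := by
      intro g
      have h7 := hx g
      erw [rho_apply] at h7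
      exact h7
    refine Prod.ext ?_ ?_
    · funext j
      show cval1 f (PresentedGroup.of (idx m j)) = 0
      rw [← hx2 _, theta_of, thetaGen_idx]
      simp
    · show ((cval1 f (b (Fin.last m)) : ℤ) : ZMod 2) = 0
      rw [← hx2 _]
      rw [show theta (m+1) (b (Fin.last m)) = -1 from by rw [theta_b]; simp]
      apply (ZMod.intCast_zmod_eq_zero_iff_dvd _ _).2
      refine ⟨-xz, ?_⟩
      push_cast
      ring

/-- Prescribed generator values realizing `(v, z)`. -/
noncomputable def wfun (m : ℕ) (v : Fin (2 * m) → ℤ) (z : ZMod 2) : Gen (m + 1) → ℤ :=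
  fun y => match y with
    | Sum.inl i => if _h : (i : ℕ) < m then v ⟨(i : ℕ), by omega⟩ else 0
    | Sum.inr i => if _h : (i : ℕ) < m then v ⟨m + (i : ℕ), by omega⟩ else (z.val : ℤ)

lemma Psi_surj : Function.Surjective (Psi m) := by
  rintro ⟨v, z⟩
  have hw : wfun m v z (Sum.inl (Fin.last m)) = 0 := by
    rw [wfun]
    simp
  obtain ⟨f, hf⟩ := exists_oneCocycle (wfun m v z) hw
  refine ⟨f, Prod.ext ?_ ?_⟩
  · funext j
    show cval1 f (PresentedGroup.of (idx m j)) = v j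
    rw [hf, idx]
    by_cases hj : (j : ℕ) < m
    · rw [dif_pos hj, wfun]
      show (if _h : ((⟨(j : ℕ), by omega⟩ : Fin (m+1)) : ℕ) < m then v ⟨_, _⟩ else 0) = v j
      rw [dif_pos hj]
    · rw [dif_neg hj, wfun]
      have hj2 := j.2
      show (if _h : ((⟨(j : ℕ) - m, by omega⟩ : Fin (m+1)) : ℕ) < m
        then v ⟨m + _, _⟩ else (z.val : ℤ)) = v j
      rw [dif_pos (show ((j : ℕ) - m) < m by omega)]
      congr 1
      apply Fin.ext
      show m + ((j : ℕ) - m) = (j : ℕ)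
      omega
  · show ((cval1 f (b (Fin.last m)) : ℤ) : ZMod 2) = z
    rw [b, hf, wfun]
    rw [dif_neg (by simp)]
    push_cast
    simp [ZMod.natCast_val, ZMod.cast_id]

/-- The first cohomology of `ℤ̃` is `ℤ^{2m} × ℤ/2`. -/
noncomputable def h1equiv (m : ℕ) :
    groupCohomology (Ztilde (m + 1)) 1 ≃+ (Fin (2 * m) → ℤ) × ZMod 2 :=
  (h1q (Ztilde (m + 1))).symm.trans
    ((Submodule.quotEquivOfEq _ _ Psi_ker.symm).toAddEquiv.trans
      ((Psi m).quotKerEquivOfSurjective Psi_surj).toAddEquiv)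

lemma h0_subsingleton (m : ℕ) : Subsingleton (groupCohomology (Ztilde (m + 1)) 0) := by
  have hsub : Subsingleton ((Ztilde (m + 1)).ρ.invariants) := by
    constructor
    rintro ⟨x, hx⟩ ⟨y, hy⟩
    have key : ∀ (u : ℤ), (∀ g, (Ztilde (m+1)).ρ g u = u) → u = 0 := by
      intro u hu
      have := hu (b (Fin.last m))
      erw [rho_apply] at this
      rw [show theta (m+1) (b (Fin.last m)) = -1 from by rw [theta_b]; simp] at this
      simp only [Units.val_neg, Units.val_one, neg_mul, one_mul] at this
      have h8 : (-u : ℤ) = u := this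
      omega
    have hx0 : x = 0 := key x (fun g => hx g)
    have hy0 : y = 0 := key y (fun g => hy g)
    exact Subtype.ext (hx0.trans hy0.symm)
  exact @Equiv.subsingleton _ _
    ((modIsoToAddEquiv (groupCohomology.H0Iso (Ztilde (m + 1)))).toEquiv) hsub

end Assemble


/-- `H⁰(G,ℤ̃) = 0`, `H¹(G,ℤ̃) ≅ ℤ^{2n-2} ⊕ ℤ/2` and
`H²(G,ℤ̃) ≅ ℤ/2`. -/
theorem statement14 (n : ℕ) (hn : 1 ≤ n) :
    Subsingleton (groupCohomology (Ztilde n) 0) ∧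
    Nonempty (groupCohomology (Ztilde n) 1 ≃+ (Fin (2 * n - 2) → ℤ) × ZMod 2) ∧
    Nonempty (groupCohomology (Ztilde n) 2 ≃+ ZMod 2) := by
  obtain ⟨m, rfl⟩ : ∃ m, n = m + 1 := ⟨n - 1, by omega⟩
  exact ⟨h0_subsingleton m, ⟨h1equiv m⟩, ⟨h2equiv m⟩⟩

end SurfaceOr
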